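/- conv(G) equals the projection onto the (x,y)-coordinates of the polyhedron of points (x, w⁰,…,wⁿ, y, v, λ) with each w^k ∈ ℝ^n, v ∈ ℝ^{n+1}, λ ∈ ℝ^{n+1} satisfying: x_j = Σ_{k=0}^n w^k_j for all j ∈ N; y = Σ_{k=0}^n v_k; Σ_{k=0}^n λ_k = 1; Σ_{j=1}^n w^k_j = (k u + (n−k) ℓ) λ_k and v_k = m(x^k) λ_k for each k = 0,…,n; ℓ λ_k ≤ w^k_j ≤ u λ_k for all j, k; and λ_k ≥ 0 for all k. -/

import Mathlib

open Finset

/-- The symmetric multilinear polynomial `m(x) = ∑_{i=2}^n c_i ∑_{|J|=i} ∏_{j∈J} x_j`. -/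
noncomputable def mPoly (n : ℕ) (c : ℕ → ℝ) (x : Fin n → ℝ) : ℝ :=
  ∑ i ∈ Finset.Icc 2 n, c i *
    ∑ J ∈ Finset.powersetCard i (Finset.univ : Finset (Fin n)), ∏ j ∈ J, x j

/-- The box `X = [ℓ,u]^n`. -/
def Xbox (n : ℕ) (ℓ u : ℝ) : Set (Fin n → ℝ) :=
  {x | ∀ j, x j ∈ Set.Icc ℓ u}

/-- The graph `G = {(x,y) : x ∈ X, y = m(x)}`. -/
def Gset (n : ℕ) (ℓ u : ℝ) (c : ℕ → ℝ) : Set ((Fin n → ℝ) × ℝ) :=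
  {p | p.1 ∈ Xbox n ℓ u ∧ p.2 = mPoly n c p.1}

/-- The point `x^k` whose first `k` coordinates are `u` and remaining ones are `ℓ`. -/
def xpt (n : ℕ) (ℓ u : ℝ) (k : ℕ) : Fin n → ℝ :=
  fun j => if (j : ℕ) < k then u else ℓ

/-- `m(x^k)`. -/
noncomputable def mval (n : ℕ) (ℓ u : ℝ) (c : ℕ → ℝ) (k : ℕ) : ℝ :=
  mPoly n c (xpt n ℓ u k)

/-- `L_k(β₀,β) = β₀ + u ∑_{j=1}^k β_j + ℓ ∑_{j=k+1}^n β_j`. -/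
noncomputable def Lk (n : ℕ) (ℓ u : ℝ) (β₀ : ℝ) (β : Fin n → ℝ) (k : ℕ) : ℝ :=
  β₀ + u * ∑ j ∈ Finset.univ.filter (fun j : Fin n => (j : ℕ) < k), β j
     + ℓ * ∑ j ∈ Finset.univ.filter (fun j : Fin n => k ≤ (j : ℕ)), β j

/-- The left-hand side `β₀ + ∑_j β_j x_j + β′ y` of an inequality, at the point `p = (x,y)`. -/
noncomputable def ineqLhs (n : ℕ) (β₀ : ℝ) (β : Fin n → ℝ) (β' : ℝ)
    (p : (Fin n → ℝ) × ℝ) : ℝ :=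
  β₀ + ∑ j, β j * p.1 j + β' * p.2

/-- A core inequality: `β′ ∈ {1,-1}` and nondecreasing coefficients `β₁ ≤ … ≤ βₙ`. -/
def IsCore (n : ℕ) (β : Fin n → ℝ) (β' : ℝ) : Prop :=
  (β' = 1 ∨ β' = -1) ∧ Monotone β

/-- Validity of the inequality `β₀ + ∑_j β_j x_j + β′ y ≥ 0` on `conv(G)`. -/
def IsValid (n : ℕ) (ℓ u : ℝ) (c : ℕ → ℝ) (β₀ : ℝ) (β : Fin n → ℝ) (β' : ℝ) : Prop :=
  ∀ p ∈ convexHull ℝ (Gset n ℓ u c), 0 ≤ ineqLhs n β₀ β β' p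

/-- The point `p` satisfies the inequality exactly (with equality). -/
def ExactAt (n : ℕ) (β₀ : ℝ) (β : Fin n → ℝ) (β' : ℝ) (p : (Fin n → ℝ) × ℝ) : Prop :=
  ineqLhs n β₀ β β' p = 0

/-- Facet-defining: there are `n+1` affinely independent points of `conv(G)`
satisfying the inequality exactly. -/
def IsFacet (n : ℕ) (ℓ u : ℝ) (c : ℕ → ℝ) (β₀ : ℝ) (β : Fin n → ℝ) (β' : ℝ) : Prop :=
  ∃ pts : Fin (n + 1) → (Fin n → ℝ) × ℝ,
    AffineIndependent ℝ pts ∧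
    ∀ i, pts i ∈ convexHull ℝ (Gset n ℓ u c) ∧ ExactAt n β₀ β β' (pts i)

/-- The point `(x^k, m(x^k))` of `G`. -/
noncomputable def vtx (n : ℕ) (ℓ u : ℝ) (c : ℕ → ℝ) (k : ℕ) : (Fin n → ℝ) × ℝ :=
  (xpt n ℓ u k, mval n ℓ u c k)

noncomputable def chiv (n : ℕ) (ℓ u : ℝ) (S : Finset (Fin n)) : Fin n → ℝ :=
  fun j => if j ∈ S then u else ℓ

-- permutation sending S-membership to T-membership

lemma exists_perm_mem_iff {α : Type*} [Fintype α] [DecidableEq α] (S T : Finset α)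
    (h : S.card = T.card) : ∃ σ : Equiv.Perm α, ∀ a, a ∈ S ↔ σ a ∈ T := by
  have h1 : Fintype.card {x // x ∈ S} = Fintype.card {x // x ∈ T} := by
    simpa [Fintype.card_coe] using h
  have h2 : Fintype.card {x // ¬ x ∈ S} = Fintype.card {x // ¬ x ∈ T} := by
    rw [Fintype.card_subtype_compl, Fintype.card_subtype_compl, h1]
  let e1 : {x // x ∈ S} ≃ {x // x ∈ T} := Fintype.equivOfCardEq h1
  let e2 : {x // ¬ x ∈ S} ≃ {x // ¬ x ∈ T} := Fintype.equivOfCardEq h2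
  refine ⟨Equiv.subtypeCongr e1 e2, fun a => ?_⟩
  unfold Equiv.subtypeCongr
  by_cases ha : a ∈ S
  · simp [Equiv.sumCompl_symm_apply_of_pos ha, ha, Subtype.coe_prop]
  · simp [Equiv.sumCompl_symm_apply_of_neg ha, ha, (e2 ⟨a, ha⟩).prop]

lemma mPoly_comp_perm (n : ℕ) (c : ℕ → ℝ) (σ : Equiv.Perm (Fin n)) (x : Fin n → ℝ) :
    mPoly n c (fun j => x (σ j)) = mPoly n c x := by
  unfold mPoly
  refine Finset.sum_congr rfl fun i _ => ?_
  congr 1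
  refine Finset.sum_nbij' (fun J => J.map σ.toEmbedding) (fun J => J.map σ.symm.toEmbedding)
    ?_ ?_ ?_ ?_ ?_
  · intro J hJ; simpa [Finset.mem_powersetCard_univ] using
      (Finset.mem_powersetCard_univ.mp hJ)
  · intro J hJ; simpa [Finset.mem_powersetCard_univ] using
      (Finset.mem_powersetCard_univ.mp hJ)
  · intro J _; ext a; simp
  · intro J _; ext a; simp
  · intro J _; rw [Finset.prod_map]; rfl

lemma card_filter_lt (n k : ℕ) (hk : k ≤ n) :
    ((univ : Finset (Fin n)).filter (fun j : Fin n => (j : ℕ) < k)).card = k := by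
  have : (univ : Finset (Fin n)).filter (fun j : Fin n => (j : ℕ) < k)
      = (univ : Finset (Fin k)).map (Fin.castLEEmb hk) := by
    ext j
    simp only [Finset.mem_filter, Finset.mem_univ, true_and, Finset.mem_map,
      Fin.castLEEmb, Function.Embedding.coeFn_mk]
    constructor
    · intro h; exact ⟨⟨(j : ℕ), h⟩, by ext; simp⟩
    · rintro ⟨i, rfl⟩; simpa using i.isLt
  rw [this, Finset.card_map, Finset.card_univ, Fintype.card_fin]

lemma mPoly_chiv (n : ℕ) (ℓ u : ℝ) (c : ℕ → ℝ) (S : Finset (Fin n)) :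
    mPoly n c (chiv n ℓ u S) = mval n ℓ u c S.card := by
  have hcard : ((univ : Finset (Fin n)).filter (fun j : Fin n => (j : ℕ) < S.card)).card = S.card :=
    card_filter_lt n S.card (by simpa using Finset.card_le_card (Finset.subset_univ S))
  obtain ⟨σ, hσ⟩ := exists_perm_mem_iff
    ((univ : Finset (Fin n)).filter (fun j : Fin n => (j : ℕ) < S.card)) S hcard
  have : xpt n ℓ u S.card = fun j => chiv n ℓ u S (σ j) := by
    funext j
    by_cases h : (j : ℕ) < S.card
    · have : σ j ∈ S := (hσ j).mp (by simp [h])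
      simp [xpt, chiv, h, this]
    · have : σ j ∉ S := fun hc => h (by simpa using (hσ j).mpr hc)
      simp [xpt, chiv, h, this]
  rw [mval, this, mPoly_comp_perm]

lemma interp (n : ℕ) (ℓ u : ℝ) (hlu : ℓ < u) (x : Fin n → ℝ) (hx : ∀ j, x j ∈ Set.Icc ℓ u) :
    ∃ lam : Finset (Fin n) → ℝ, (∀ S, 0 ≤ lam S) ∧
      ∀ J : Finset (Fin n),
        ∑ S ∈ (univ : Finset (Fin n)).powerset, lam S * ∏ j ∈ J, chiv n ℓ u S j
          = ∏ j ∈ J, x j := by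
  set t : Fin n → ℝ := fun j => (x j - ℓ) / (u - ℓ) with ht
  have hu : (0:ℝ) < u - ℓ := by linarith
  have ht0 : ∀ j, 0 ≤ t j := fun j => div_nonneg (by linarith [(hx j).1]) hu.le
  have ht1 : ∀ j, t j ≤ 1 := fun j => (div_le_one hu).mpr (by linarith [(hx j).2])
  refine ⟨fun S => (∏ j ∈ S, t j) * ∏ j ∈ univ \ S, (1 - t j), fun S =>
    mul_nonneg (Finset.prod_nonneg fun j _ => ht0 j)
      (Finset.prod_nonneg fun j _ => by linarith [ht1 j]), fun J => ?_⟩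
  have key := Finset.prod_add (fun j : Fin n => t j * (if j ∈ J then u else 1))
    (fun j : Fin n => (1 - t j) * (if j ∈ J then ℓ else 1)) univ
  have hL : ∏ j : Fin n, ((fun j : Fin n => t j * (if j ∈ J then u else 1)) j
      + (fun j : Fin n => (1 - t j) * (if j ∈ J then ℓ else 1)) j) = ∏ j ∈ J, x j := by
    have hpt : ∀ j : Fin n, t j * (if j ∈ J then u else 1)
        + (1 - t j) * (if j ∈ J then ℓ else 1) = if j ∈ J then x j else 1 := by
      intro j
      by_cases h : j ∈ J
      · simp only [h, if_true, ht]; field_simp; ring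
      · simp only [h, if_false]; ring
    simp only [hpt]
    rw [Finset.prod_ite_mem, Finset.univ_inter]
  rw [hL] at key
  rw [key]
  dsimp only
  refine Finset.sum_congr rfl fun S hS => ?_
  rw [Finset.prod_mul_distrib, Finset.prod_mul_distrib]
  have h1 : ∏ j ∈ S, (if j ∈ J then u else (1:ℝ)) = u ^ (J ∩ S).card := by
    rw [Finset.prod_ite_mem, Finset.prod_const, Finset.inter_comm]
  have h2 : ∏ j ∈ univ \ S, (if j ∈ J then ℓ else (1:ℝ)) = ℓ ^ (J \ S).card := by
    have e2 : (univ \ S) ∩ J = J \ S := by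
      ext a
      simp only [Finset.mem_inter, Finset.mem_sdiff, Finset.mem_univ, true_and]
      tauto
    rw [Finset.prod_ite_mem, e2, Finset.prod_const]
  have h3 : ∏ j ∈ J, chiv n ℓ u S j
      = u ^ (J ∩ S).card * ℓ ^ (J \ S).card := by
    have e3 : J.filter (fun a => a ∈ S) = J ∩ S := Finset.filter_mem_eq_inter
    have e4 : J.filter (fun a => ¬ a ∈ S) = J \ S := (Finset.sdiff_eq_filter J S).symm
    unfold chiv
    rw [Finset.prod_ite (fun _ => u) (fun _ => ℓ), e3, e4, Finset.prod_const, Finset.prod_const]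
  rw [h1, h2, h3]
  ring

lemma sum_chiv (n : ℕ) (ℓ u : ℝ) (S : Finset (Fin n)) :
    ∑ j, chiv n ℓ u S j = (S.card : ℝ) * u + ((n - S.card : ℕ) : ℝ) * ℓ := by
  unfold chiv
  rw [Finset.sum_ite (fun _ => u) (fun _ => ℓ), Finset.sum_const, Finset.sum_const]
  have e1 : (univ : Finset (Fin n)).filter (fun a => a ∈ S) = S := by
    rw [Finset.filter_mem_eq_inter, Finset.univ_inter]
  have e2 : (univ : Finset (Fin n)).filter (fun a => ¬ a ∈ S) = univ \ S :=
    (Finset.sdiff_eq_filter univ S).symm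
  rw [e1, e2, Finset.card_sdiff_of_subset (Finset.subset_univ S), Finset.card_univ, Fintype.card_fin]
  simp [nsmul_eq_mul]

lemma slice_mem_aux (n : ℕ) (ℓ u : ℝ) (hlu : ℓ < u) (c : ℕ → ℝ) (d : ℕ) :
    ∀ k ≤ n, ∀ z : Fin n → ℝ, (∀ j, z j ∈ Set.Icc ℓ u) →
      (∑ j, z j = (k : ℝ) * u + ((n - k : ℕ) : ℝ) * ℓ) →
      ((univ : Finset (Fin n)).filter (fun j => z j ≠ ℓ ∧ z j ≠ u)).card = d →
      (z, mval n ℓ u c k) ∈ convexHull ℝ (Gset n ℓ u c) := by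
  induction d using Nat.strong_induction_on with
  | _ d ih =>
  intro k hk z hz hsum hd
  by_cases hF : ((univ : Finset (Fin n)).filter (fun j => z j ≠ ℓ ∧ z j ≠ u)) = ∅
  · -- base case: all coordinates are ℓ or u
    have hall : ∀ j, z j = ℓ ∨ z j = u := by
      intro j
      by_contra h
      push_neg at h
      have : j ∈ (univ : Finset (Fin n)).filter (fun j => z j ≠ ℓ ∧ z j ≠ u) := by
        simp [h.1, h.2]
      rw [hF] at this
      exact absurd this (Finset.notMem_empty j)
    set S := (univ : Finset (Fin n)).filter (fun j => z j = u) with hSdef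
    have hzS : z = chiv n ℓ u S := by
      funext j
      by_cases h : z j = u
      · simp [chiv, hSdef, h]
      · have hl := (hall j).resolve_right h
        have hns : j ∉ S := by simp [hSdef, h]
        simp [chiv, hns, hl]
    have hSn : S.card ≤ n := by
      simpa using Finset.card_le_card (Finset.subset_univ S)
    have hsum2 : (S.card : ℝ) * u + ((n - S.card : ℕ) : ℝ) * ℓ
        = (k : ℝ) * u + ((n - k : ℕ) : ℝ) * ℓ := by
      rw [← sum_chiv n ℓ u S, ← hzS, hsum]
    have hScard : S.card = k := by
      rw [Nat.cast_sub hSn, Nat.cast_sub hk] at hsum2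
      have hq : ((S.card : ℝ) - k) * (u - ℓ) = 0 := by linarith
      have := mul_eq_zero.mp hq
      have h0 : (S.card : ℝ) = k := by
        rcases this with h | h
        · linarith
        · exact absurd h (by linarith)
      exact_mod_cast h0
    have hm : mval n ℓ u c k = mPoly n c z := by
      rw [← hScard, ← mPoly_chiv, hzS]
    exact subset_convexHull ℝ _ ⟨hz, hm⟩
  · -- inductive step: at least two "fractional" coordinates
    obtain ⟨i, hi⟩ := Finset.nonempty_iff_ne_empty.mpr hF
    have hiF := Finset.mem_filter.mp hi
    have hzi_l : ℓ < z i := lt_of_le_of_ne (hz i).1 (Ne.symm hiF.2.1)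
    have hzi_u : z i < u := lt_of_le_of_ne (hz i).2 hiF.2.2
    have hn1 : 1 ≤ n := Nat.one_le_iff_ne_zero.mpr (by rintro rfl; exact (Fin.elim0 i))
    have h2 : ∃ j ∈ (univ : Finset (Fin n)).filter (fun j => z j ≠ ℓ ∧ z j ≠ u), j ≠ i := by
      by_contra h
      push_neg at h
      -- every coordinate other than i is ℓ or u
      set T := (univ : Finset (Fin n)).erase i with hT
      have hTz : ∀ a ∈ T, z a = ℓ ∨ z a = u := by
        intro a ha
        by_contra hc
        push_neg at hc
        have haF : a ∈ (univ : Finset (Fin n)).filter (fun j => z j ≠ ℓ ∧ z j ≠ u) := by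
          simp [hc.1, hc.2]
        exact (Finset.mem_erase.mp ha).1 (h a haF)
      set A := T.filter (fun a => z a = u) with hA
      set B := T.filter (fun a => ¬ z a = u) with hB
      have hTcard : T.card = n - 1 := by
        rw [hT, Finset.card_erase_of_mem (Finset.mem_univ i), Finset.card_univ,
          Fintype.card_fin]
      have hAB : A.card + B.card = n - 1 := by
        rw [hA, hB, Finset.card_filter_add_card_filter_not, hTcard]
      have hsumT : ∑ a ∈ T, z a = (A.card : ℝ) * u + (B.card : ℝ) * ℓ := by
        rw [← Finset.sum_filter_add_sum_filter_not T (fun a => z a = u)]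
        congr 1
        · rw [Finset.sum_congr rfl (fun a ha => (Finset.mem_filter.mp ha).2),
            Finset.sum_const, nsmul_eq_mul]
        · rw [← hB, Finset.sum_congr rfl
            (fun a ha => ((hTz a (Finset.mem_filter.mp ha).1).resolve_right
              (Finset.mem_filter.mp ha).2)), Finset.sum_const, nsmul_eq_mul]
      have htot : z i + ∑ a ∈ T, z a = ∑ a, z a := by
        rw [hT]
        exact Finset.add_sum_erase _ _ (Finset.mem_univ i)
      have hABr : (A.card : ℝ) + (B.card : ℝ) = (n : ℝ) - 1 := by
        have := hAB
        have h' : (A.card : ℝ) + (B.card : ℝ) = ((n - 1 : ℕ) : ℝ) := by exact_mod_cast this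
        rw [h', Nat.cast_sub hn1]; simp
      have hkr : ((n - k : ℕ) : ℝ) = (n : ℝ) - k := by rw [Nat.cast_sub hk]
      have htotr : z i + ((A.card : ℝ) * u + (B.card : ℝ) * ℓ)
          = (k : ℝ) * u + ((n : ℝ) - k) * ℓ := by
        rw [← hsumT, htot, hsum, hkr]
      set q : ℤ := (k : ℤ) - (A.card : ℤ) with hqdef
      have hqr : ((q : ℤ) : ℝ) = (k : ℝ) - (A.card : ℝ) := by rw [hqdef]; push_cast; ring
      have key : z i - ℓ = ((q : ℤ) : ℝ) * (u - ℓ) := by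
        rw [hqr]; linear_combination htotr - ℓ * hABr
      have hq0 : 0 < q := by
        by_contra hq
        push_neg at hq
        have : ((q : ℤ) : ℝ) ≤ 0 := by exact_mod_cast hq
        nlinarith
      have hq1 : (1 : ℝ) ≤ ((q : ℤ) : ℝ) := by exact_mod_cast hq0
      nlinarith
    obtain ⟨j, hj, hji⟩ := h2
    have hjF := Finset.mem_filter.mp hj
    have hzj_l : ℓ < z j := lt_of_le_of_ne (hz j).1 (Ne.symm hjF.2.1)
    have hzj_u : z j < u := lt_of_le_of_ne (hz j).2 hjF.2.2
    set e : Fin n → ℝ := fun a => (if a = i then 1 else 0) - (if a = j then 1 else 0) with he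
    have hei : e i = 1 := by simp [he, Ne.symm hji]
    have hej : e j = -1 := by simp [he, hji]
    have heo : ∀ a, a ≠ i → a ≠ j → e a = 0 := by intro a h1 h2; simp [he, h1, h2]
    have hesum : ∑ a, e a = 0 := by
      rw [he, Finset.sum_sub_distrib]
      simp
    set δp := min (u - z i) (z j - ℓ) with hδp
    set δm := min (z i - ℓ) (u - z j) with hδm
    have hδp0 : 0 < δp := lt_min (by linarith) (by linarith)
    have hδm0 : 0 < δm := lt_min (by linarith) (by linarith)
    have hδp1 : δp ≤ u - z i := min_le_left _ _
    have hδp2 : δp ≤ z j - ℓ := min_le_right _ _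
    have hδm1 : δm ≤ z i - ℓ := min_le_left _ _
    have hδm2 : δm ≤ u - z j := min_le_right _ _
    set zp : Fin n → ℝ := fun a => z a + δp * e a with hzp
    set zm : Fin n → ℝ := fun a => z a - δm * e a with hzm
    have hzpi : zp i = z i + δp := by rw [hzp]; dsimp only; rw [hei]; ring
    have hzpj : zp j = z j - δp := by rw [hzp]; dsimp only; rw [hej]; ring
    have hzpo : ∀ a, a ≠ i → a ≠ j → zp a = z a := by
      intro a h1 h2; rw [hzp]; dsimp only; rw [heo a h1 h2]; ring
    have hzmi : zm i = z i - δm := by rw [hzm]; dsimp only; rw [hei]; ring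
    have hzmj : zm j = z j + δm := by rw [hzm]; dsimp only; rw [hej]; ring
    have hzmo : ∀ a, a ≠ i → a ≠ j → zm a = z a := by
      intro a h1 h2; rw [hzm]; dsimp only; rw [heo a h1 h2]; ring
    have hzpbox : ∀ a, zp a ∈ Set.Icc ℓ u := by
      intro a
      by_cases hai : a = i
      · subst hai; rw [hzpi]; exact ⟨by linarith, by linarith⟩
      by_cases haj : a = j
      · subst haj; rw [hzpj]; exact ⟨by linarith, by linarith⟩
      · rw [hzpo a hai haj]; exact hz a
    have hzmbox : ∀ a, zm a ∈ Set.Icc ℓ u := by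
      intro a
      by_cases hai : a = i
      · subst hai; rw [hzmi]; exact ⟨by linarith, by linarith⟩
      by_cases haj : a = j
      · subst haj; rw [hzmj]; exact ⟨by linarith, by linarith⟩
      · rw [hzmo a hai haj]; exact hz a
    have hzpsum : ∑ a, zp a = (k : ℝ) * u + ((n - k : ℕ) : ℝ) * ℓ := by
      rw [hzp]
      dsimp only
      rw [Finset.sum_add_distrib, ← Finset.mul_sum, hesum, hsum]
      ring
    have hzmsum : ∑ a, zm a = (k : ℝ) * u + ((n - k : ℕ) : ℝ) * ℓ := by
      rw [hzm]
      dsimp only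
      rw [Finset.sum_sub_distrib, ← Finset.mul_sum, hesum, hsum]
      ring
    have hsubp : (univ.filter (fun a => zp a ≠ ℓ ∧ zp a ≠ u))
        ⊆ (univ.filter (fun a => z a ≠ ℓ ∧ z a ≠ u)) := by
      intro a ha
      by_cases hai : a = i
      · subst hai; exact hi
      by_cases haj : a = j
      · subst haj; exact hj
      · have hm := (Finset.mem_filter.mp ha).2
        rw [hzpo a hai haj] at hm
        exact Finset.mem_filter.mpr ⟨Finset.mem_univ a, hm⟩
    have hsubm : (univ.filter (fun a => zm a ≠ ℓ ∧ zm a ≠ u))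
        ⊆ (univ.filter (fun a => z a ≠ ℓ ∧ z a ≠ u)) := by
      intro a ha
      by_cases hai : a = i
      · subst hai; exact hi
      by_cases haj : a = j
      · subst haj; exact hj
      · have hm := (Finset.mem_filter.mp ha).2
        rw [hzmo a hai haj] at hm
        exact Finset.mem_filter.mpr ⟨Finset.mem_univ a, hm⟩
    have hltp : (univ.filter (fun a => zp a ≠ ℓ ∧ zp a ≠ u)).card < d := by
      rw [← hd]
      apply Finset.card_lt_card
      rw [Finset.ssubset_iff_of_subset hsubp]
      rcases le_total (u - z i) (z j - ℓ) with hc | hc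
      · refine ⟨i, hi, fun hmem => (Finset.mem_filter.mp hmem).2.2 ?_⟩
        rw [hzpi, hδp, min_eq_left hc]; ring
      · refine ⟨j, hj, fun hmem => (Finset.mem_filter.mp hmem).2.1 ?_⟩
        rw [hzpj, hδp, min_eq_right hc]; ring
    have hltm : (univ.filter (fun a => zm a ≠ ℓ ∧ zm a ≠ u)).card < d := by
      rw [← hd]
      apply Finset.card_lt_card
      rw [Finset.ssubset_iff_of_subset hsubm]
      rcases le_total (z i - ℓ) (u - z j) with hc | hc
      · refine ⟨i, hi, fun hmem => (Finset.mem_filter.mp hmem).2.1 ?_⟩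
        rw [hzmi, hδm, min_eq_left hc]; ring
      · refine ⟨j, hj, fun hmem => (Finset.mem_filter.mp hmem).2.2 ?_⟩
        rw [hzmj, hδm, min_eq_right hc]; ring
    have memp := ih _ hltp k hk zp hzpbox hzpsum rfl
    have memm := ih _ hltm k hk zm hzmbox hzmsum rfl
    have hne : δp + δm ≠ 0 := by positivity
    set θ₁ := δm / (δp + δm) with hθ₁def
    set θ₂ := δp / (δp + δm) with hθ₂def
    have hθ₁ : 0 ≤ θ₁ := by positivity
    have hθ₂ : 0 ≤ θ₂ := by positivity
    have hsum1 : θ₁ + θ₂ = 1 := by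
      rw [hθ₁def, hθ₂def, ← add_div]
      rw [add_comm δm δp] -- ensure order
      exact div_self hne
    have hcomb : θ₁ • ((zp, mval n ℓ u c k) : (Fin n → ℝ) × ℝ)
        + θ₂ • ((zm, mval n ℓ u c k) : (Fin n → ℝ) × ℝ) = (z, mval n ℓ u c k) := by
      have h2' : θ₁ * δp - θ₂ * δm = 0 := by
        rw [hθ₁def, hθ₂def]
        field_simp
        ring
      rw [Prod.smul_mk, Prod.smul_mk, Prod.mk_add_mk, Prod.mk.injEq]
      constructor
      · funext a
        have : (θ₁ • zp + θ₂ • zm) a = θ₁ * zp a + θ₂ * zm a := by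
          simp [Pi.add_apply, smul_eq_mul]
        rw [this, hzp, hzm]
        dsimp only
        have expand : θ₁ * (z a + δp * e a) + θ₂ * (z a - δm * e a)
            = (θ₁ + θ₂) * z a + (θ₁ * δp - θ₂ * δm) * e a := by ring
        rw [expand, hsum1, h2']
        ring
      · rw [smul_eq_mul, smul_eq_mul, ← add_mul, hsum1, one_mul]
    have := (convex_convexHull ℝ (Gset n ℓ u c)) memp memm hθ₁ hθ₂ hsum1
    rwa [hcomb] at this

def QSet (n : ℕ) (ℓ u : ℝ) (c : ℕ → ℝ) : Set ((Fin n → ℝ) × ℝ) :=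
  {p : (Fin n → ℝ) × ℝ |
    ∃ (w : Fin (n + 1) → Fin n → ℝ) (v lam : Fin (n + 1) → ℝ),
      (∀ j, p.1 j = ∑ k, w k j) ∧
      (p.2 = ∑ k, v k) ∧
      (∑ k, lam k = 1) ∧
      (∀ k : Fin (n + 1),
        ∑ j, w k j = (((k : ℕ) : ℝ) * u + ((n - (k : ℕ) : ℕ) : ℝ) * ℓ) * lam k) ∧
      (∀ k : Fin (n + 1), v k = mval n ℓ u c (k : ℕ) * lam k) ∧
      (∀ (k : Fin (n + 1)) (j : Fin n), ℓ * lam k ≤ w k j ∧ w k j ≤ u * lam k) ∧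
      (∀ k, 0 ≤ lam k)}

lemma QSet_convex (n : ℕ) (ℓ u : ℝ) (c : ℕ → ℝ) : Convex ℝ (QSet n ℓ u c) := by
  rintro p ⟨w1, v1, l1, h11, h12, h13, h14, h15, h16, h17⟩
    q ⟨w2, v2, l2, h21, h22, h23, h24, h25, h26, h27⟩ a b ha hb hab
  refine ⟨fun k j => a * w1 k j + b * w2 k j, fun k => a * v1 k + b * v2 k,
    fun k => a * l1 k + b * l2 k, ?_, ?_, ?_, ?_, ?_, ?_, ?_⟩
  · intro j
    have : (a • p + b • q).1 j = a * p.1 j + b * q.1 j := rfl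
    rw [this, h11 j, h21 j, Finset.sum_add_distrib, ← Finset.mul_sum, ← Finset.mul_sum]
  · have : (a • p + b • q).2 = a * p.2 + b * q.2 := rfl
    rw [this, h12, h22, Finset.sum_add_distrib, ← Finset.mul_sum, ← Finset.mul_sum]
  · rw [Finset.sum_add_distrib, ← Finset.mul_sum, ← Finset.mul_sum, h13, h23]
    simpa using hab
  · intro k
    rw [Finset.sum_add_distrib, ← Finset.mul_sum, ← Finset.mul_sum, h14 k, h24 k]
    ring
  · intro k
    dsimp only
    rw [h15 k, h25 k]
    ring
  · intro k j
    have b1 := h16 k j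
    have b2 := h26 k j
    constructor
    · have e1 : ℓ * (a * l1 k + b * l2 k) = a * (ℓ * l1 k) + b * (ℓ * l2 k) := by ring
      rw [e1]
      exact add_le_add (mul_le_mul_of_nonneg_left b1.1 ha) (mul_le_mul_of_nonneg_left b2.1 hb)
    · have e1 : u * (a * l1 k + b * l2 k) = a * (u * l1 k) + b * (u * l2 k) := by ring
      rw [e1]
      exact add_le_add (mul_le_mul_of_nonneg_left b1.2 ha) (mul_le_mul_of_nonneg_left b2.2 hb)
  · intro k
    exact add_nonneg (mul_nonneg ha (h17 k)) (mul_nonneg hb (h27 k))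

lemma chiv_mem_Icc (n : ℕ) (ℓ u : ℝ) (hlu : ℓ < u) (S : Finset (Fin n)) (j : Fin n) :
    ℓ ≤ chiv n ℓ u S j ∧ chiv n ℓ u S j ≤ u := by
  unfold chiv
  by_cases h : j ∈ S <;> simp [h, le_of_lt hlu]

lemma vertex_mem_QSet (n : ℕ) (ℓ u : ℝ) (hlu : ℓ < u) (c : ℕ → ℝ) (S : Finset (Fin n)) :
    (chiv n ℓ u S, mPoly n c (chiv n ℓ u S)) ∈ QSet n ℓ u c := by
  have hSn : S.card ≤ n := by simpa using Finset.card_le_card (Finset.subset_univ S)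
  set k₀ : Fin (n + 1) := ⟨S.card, Nat.lt_succ_of_le hSn⟩ with hk₀
  refine ⟨fun k j => if k = k₀ then chiv n ℓ u S j else 0,
    fun k => if k = k₀ then mPoly n c (chiv n ℓ u S) else 0,
    fun k => if k = k₀ then 1 else 0, ?_, ?_, ?_, ?_, ?_, ?_, ?_⟩
  · intro j; rw [Finset.sum_ite_eq' univ k₀ (fun _ => chiv n ℓ u S j)]; simp
  · rw [Finset.sum_ite_eq' univ k₀ (fun _ => mPoly n c (chiv n ℓ u S))]; simp
  · rw [Finset.sum_ite_eq' univ k₀ (fun _ => (1:ℝ))]; simp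
  · intro k
    by_cases h : k = k₀
    · subst h
      simp only [if_true, mul_one]
      exact sum_chiv n ℓ u S
    · simp [h]
  · intro k
    by_cases h : k = k₀
    · subst h
      simp only [if_true, mul_one]
      exact mPoly_chiv n ℓ u c S
    · simp [h]
  · intro k j
    by_cases h : k = k₀
    · subst h
      simpa using chiv_mem_Icc n ℓ u hlu S j
    · simp [h]
  · intro k
    by_cases h : k = k₀ <;> simp [h]

lemma G_subset_QSet (n : ℕ) (ℓ u : ℝ) (hlu : ℓ < u) (c : ℕ → ℝ) :
    Gset n ℓ u c ⊆ QSet n ℓ u c := by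
  rintro ⟨x, y⟩ ⟨hx, hy⟩
  obtain ⟨lam, hlam0, hlamJ⟩ := interp n ℓ u hlu x hx
  have hsum1 : ∑ S ∈ (univ : Finset (Fin n)).powerset, lam S = 1 := by
    have := hlamJ ∅
    simpa using this
  have key := Convex.sum_mem (QSet_convex n ℓ u c) (fun S _ => hlam0 S) hsum1
    (fun S _ => vertex_mem_QSet n ℓ u hlu c S)
  have hsnd : ∑ S ∈ (univ : Finset (Fin n)).powerset, lam S * mPoly n c (chiv n ℓ u S)
      = mPoly n c x := by
    unfold mPoly
    calc ∑ S ∈ (univ : Finset (Fin n)).powerset,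
          lam S * ∑ i ∈ Finset.Icc 2 n, c i *
            ∑ J ∈ Finset.powersetCard i univ, ∏ j ∈ J, chiv n ℓ u S j
        = ∑ S ∈ (univ : Finset (Fin n)).powerset, ∑ i ∈ Finset.Icc 2 n,
            c i * (lam S * ∑ J ∈ Finset.powersetCard i univ, ∏ j ∈ J, chiv n ℓ u S j) := by
          refine Finset.sum_congr rfl fun S _ => ?_
          rw [Finset.mul_sum]
          exact Finset.sum_congr rfl fun i _ => mul_left_comm _ _ _
      _ = ∑ i ∈ Finset.Icc 2 n, ∑ S ∈ (univ : Finset (Fin n)).powerset,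
            c i * (lam S * ∑ J ∈ Finset.powersetCard i univ, ∏ j ∈ J, chiv n ℓ u S j) :=
          Finset.sum_comm
      _ = ∑ i ∈ Finset.Icc 2 n, c i * ∑ S ∈ (univ : Finset (Fin n)).powerset,
            ∑ J ∈ Finset.powersetCard i univ, lam S * ∏ j ∈ J, chiv n ℓ u S j := by
          refine Finset.sum_congr rfl fun i _ => ?_
          rw [← Finset.mul_sum]
          congr 1
          exact Finset.sum_congr rfl fun S _ => Finset.mul_sum _ _ _
      _ = ∑ i ∈ Finset.Icc 2 n, c i * ∑ J ∈ Finset.powersetCard i univ,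
            ∑ S ∈ (univ : Finset (Fin n)).powerset, lam S * ∏ j ∈ J, chiv n ℓ u S j := by
          refine Finset.sum_congr rfl fun i _ => congrArg _ Finset.sum_comm
      _ = ∑ i ∈ Finset.Icc 2 n, c i * ∑ J ∈ Finset.powersetCard i univ, ∏ j ∈ J, x j := by
          refine Finset.sum_congr rfl fun i _ => congrArg _ ?_
          exact Finset.sum_congr rfl fun J _ => hlamJ J
  have hxy : ((x, y) : (Fin n → ℝ) × ℝ) = ∑ S ∈ (univ : Finset (Fin n)).powerset,
      lam S • ((chiv n ℓ u S, mPoly n c (chiv n ℓ u S)) : (Fin n → ℝ) × ℝ) := by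
    refine Prod.ext ?_ ?_
    · rw [Prod.fst_sum]
      simp only [Prod.smul_fst]
      funext j
      rw [Finset.sum_apply]
      have := hlamJ {j}
      simp only [Finset.prod_singleton] at this
      simp only [Pi.smul_apply, smul_eq_mul]
      exact this.symm
    · rw [Prod.snd_sum]
      simp only [Prod.smul_snd, smul_eq_mul]
      rw [hsnd]
      exact hy
  rw [hxy]
  exact key

lemma QSet_subset (n : ℕ) (ℓ u : ℝ) (hlu : ℓ < u) (c : ℕ → ℝ) :
    QSet n ℓ u c ⊆ convexHull ℝ (Gset n ℓ u c) := by
  rintro ⟨x, y⟩ ⟨w, v, lam, h1, h2, h3, h4, h5, h6, h7⟩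
  set K := (univ : Finset (Fin (n+1))).filter (fun k => lam k ≠ 0) with hK
  have hw0 : ∀ k, lam k = 0 → ∀ j, w k j = 0 := by
    intro k hk j
    have := h6 k j
    rw [hk, mul_zero, mul_zero] at this
    linarith [this.1, this.2]
  have hv0 : ∀ k, lam k = 0 → v k = 0 := fun k hk => by rw [h5 k, hk, mul_zero]
  have hKsum : ∑ k ∈ K, lam k = 1 := by
    rw [← h3]
    exact Finset.sum_filter_ne_zero _
  have hpt : ∀ k ∈ K, (((lam k)⁻¹ • w k, mval n ℓ u c (k : ℕ)) : (Fin n → ℝ) × ℝ)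
      ∈ convexHull ℝ (Gset n ℓ u c) := by
    intro k hk
    have hlk : lam k ≠ 0 := (Finset.mem_filter.mp hk).2
    have hlkpos : 0 < lam k := lt_of_le_of_ne (h7 k) (Ne.symm hlk)
    refine slice_mem_aux n ℓ u hlu c _ (k : ℕ) (Nat.lt_succ_iff.mp k.isLt) _ ?_ ?_ rfl
    · intro j
      have hb := h6 k j
      have hev : ((lam k)⁻¹ • w k) j = w k j / lam k := by
        simp [div_eq_inv_mul]
      rw [hev]
      exact ⟨(le_div_iff₀ hlkpos).mpr (by linarith [hb.1]),
        (div_le_iff₀ hlkpos).mpr (by linarith [hb.2])⟩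
    · have : ∑ j, ((lam k)⁻¹ • w k) j = (lam k)⁻¹ * ∑ j, w k j := by
        simp [Finset.mul_sum]
      rw [this, h4 k]
      field_simp
  have key := Convex.sum_mem (convex_convexHull ℝ (Gset n ℓ u c))
    (fun k _ => h7 k) hKsum hpt
  have hxy : ((x, y) : (Fin n → ℝ) × ℝ) = ∑ k ∈ K,
      lam k • ((((lam k)⁻¹ • w k, mval n ℓ u c (k : ℕ))) : (Fin n → ℝ) × ℝ) := by
    refine Prod.ext ?_ ?_
    · rw [Prod.fst_sum]
      simp only [Prod.smul_fst]
      funext j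
      rw [Finset.sum_apply]
      have step : ∀ k ∈ K, (lam k • ((lam k)⁻¹ • w k)) j = w k j := by
        intro k hk
        have hlk : lam k ≠ 0 := (Finset.mem_filter.mp hk).2
        simp [mul_inv_cancel_left₀ hlk]
      rw [Finset.sum_congr rfl step]
      rw [Finset.sum_subset (Finset.filter_subset _ _)]
      · exact h1 j
      · intro k _ hk
        have : lam k = 0 := by
          by_contra hc
          exact hk (Finset.mem_filter.mpr ⟨Finset.mem_univ k, hc⟩)
        exact hw0 k this j
    · rw [Prod.snd_sum]
      simp only [Prod.smul_snd]
      have step : ∀ k ∈ K, lam k • mval n ℓ u c (k : ℕ) = v k := by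
        intro k _
        rw [smul_eq_mul, mul_comm, ← h5 k]
      rw [Finset.sum_congr rfl step]
      rw [Finset.sum_subset (Finset.filter_subset _ _)]
      · exact h2
      · intro k _ hk
        have : lam k = 0 := by
          by_contra hc
          exact hk (Finset.mem_filter.mpr ⟨Finset.mem_univ k, hc⟩)
        exact hv0 k this
  rw [hxy]
  exact key

/-- `conv(G)` is the projection onto the `(x,y)`-coordinates of the
disjunctive-programming polyhedron in the variables `(x, w⁰,…,wⁿ, y, v, λ)`. -/
theorem stmt2 (n : ℕ) (hn : 2 ≤ n) (ℓ u : ℝ) (hlu : ℓ < u) (c : ℕ → ℝ) :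
    convexHull ℝ (Gset n ℓ u c) =
      {p : (Fin n → ℝ) × ℝ |
        ∃ (w : Fin (n + 1) → Fin n → ℝ) (v lam : Fin (n + 1) → ℝ),
          (∀ j, p.1 j = ∑ k, w k j) ∧
          (p.2 = ∑ k, v k) ∧
          (∑ k, lam k = 1) ∧
          (∀ k : Fin (n + 1),
            ∑ j, w k j = (((k : ℕ) : ℝ) * u + ((n - (k : ℕ) : ℕ) : ℝ) * ℓ) * lam k) ∧
          (∀ k : Fin (n + 1), v k = mval n ℓ u c (k : ℕ) * lam k) ∧
          (∀ (k : Fin (n + 1)) (j : Fin n), ℓ * lam k ≤ w k j ∧ w k j ≤ u * lam k) ∧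
          (∀ k, 0 ≤ lam k)} := by
  exact Set.Subset.antisymm
    (convexHull_min (G_subset_QSet n ℓ u hlu c) (QSet_convex n ℓ u c))
    (QSet_subset n ℓ u hlu c)
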